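/- arXiv:0903.0768 — 2 statements merged into one kernel-verified Lean document; each statement's English description precedes it below -/
import Mathlib

section
/- Under the hypotheses of Lemma 4.5, if a loop x = (y, r) : S¹ → M × ℝ₊ contains points t, t' with r(t) ≤ A₀ and r(t') ≥ B₀ (with 1 ≤ A₀ < B₀), and on the region M × [A₀, B₀] the pointwise norm satisfies |ẋ − b X_H(x)|² = ṙ²/r + r|ẏ − bR(y)|², then the L² norm satisfies (∫₀¹ |ẋ − b X_H(x)|² dt)^{1/2} ≥ (B₀ − A₀)/√(B₀). -/
/-- Lemma 4.5: for a loop `x = (y, r)` (period 1) whose radial component takes a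
value `≤ A₀` and a value `≥ B₀` with `1 ≤ A₀ < B₀`, if the pointwise norm `N`
of `ẋ − b X_H(x)` satisfies `N² = ṙ²/r + r·|ẏ − bR(y)|²` (the last term being
the nonnegative quantity `Y`) whenever `A₀ ≤ r ≤ B₀`, then the `L²`-norm of
`ẋ − b X_H(x)` over the loop is at least `(B₀ − A₀)/√B₀`. -/
theorem stmt_5 (r r' Y N : ℝ → ℝ) (A₀ B₀ : ℝ)
    (hA₀ : 1 ≤ A₀) (hAB : A₀ < B₀)
    (hrper : Function.Periodic r 1) (hNper : Function.Periodic N 1)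
    (hrpos : ∀ t : ℝ, 0 < r t)
    (hderiv : ∀ t : ℝ, HasDerivAt r (r' t) t)
    (hr'cont : Continuous r') (hNcont : Continuous N)
    (hY : ∀ t : ℝ, 0 ≤ Y t)
    (hnorm : ∀ t : ℝ, A₀ ≤ r t → r t ≤ B₀ →
      (N t) ^ 2 = (r' t) ^ 2 / r t + r t * Y t)
    (ta : ℝ) (hta : r ta ≤ A₀) (tb : ℝ) (htb : B₀ ≤ r tb) :
    (B₀ - A₀) / Real.sqrt B₀ ≤ Real.sqrt (∫ t in (0:ℝ)..1, (N t) ^ 2) := by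
  have hrc : Continuous r := by
    rw [continuous_iff_continuousAt]; exact fun t => (hderiv t).continuousAt
  have hB₀pos : (0:ℝ) < B₀ := lt_of_le_of_lt (le_trans zero_le_one hA₀) hAB
  -- normalize tb into [ta, ta+1)
  set n : ℤ := ⌈ta - tb⌉ with hn
  set tb' : ℝ := tb + (n : ℝ) with htb'
  have hrtb' : r tb' = r tb := by
    have := (hrper.int_mul n) tb
    simpa [mul_one] using this
  have htatb' : ta ≤ tb' := by
    have := Int.le_ceil (ta - tb)
    rw [htb']; linarith
  have htb'lt : tb' < ta + 1 := by
    have := Int.ceil_lt_add_one (ta - tb)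
    rw [htb']; linarith
  have htbB : B₀ ≤ r tb' := by rw [hrtb']; exact htb
  -- t₁ : first time in [ta, tb'] where r ≥ B₀
  set S₁ : Set ℝ := {t | t ∈ Set.Icc ta tb' ∧ B₀ ≤ r t} with hS₁
  have hS₁closed : IsClosed S₁ := by
    have : S₁ = Set.Icc ta tb' ∩ {t | B₀ ≤ r t} := rfl
    rw [this]
    exact isClosed_Icc.inter (isClosed_le continuous_const hrc)
  have hS₁ne : S₁.Nonempty := ⟨tb', ⟨htatb', le_refl _⟩, htbB⟩
  have hS₁bdd : BddBelow S₁ := ⟨ta, fun t ht => ht.1.1⟩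
  set t₁ : ℝ := sInf S₁ with ht₁def
  have ht₁mem : t₁ ∈ S₁ := hS₁closed.csInf_mem hS₁ne hS₁bdd
  have hta_t₁ : ta ≤ t₁ := ht₁mem.1.1
  have ht₁tb' : t₁ ≤ tb' := ht₁mem.1.2
  have ht₁B : B₀ ≤ r t₁ := ht₁mem.2
  have hlt : ∀ t ∈ Set.Ico ta t₁, r t < B₀ := by
    intro t ht
    by_contra h
    push_neg at h
    have : t ∈ S₁ := ⟨⟨ht.1, le_trans (le_of_lt ht.2) ht₁tb'⟩, h⟩
    exact absurd (csInf_le hS₁bdd this) (not_le.2 ht.2)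
  have hta_lt_t₁ : ta < t₁ := by
    rcases lt_or_eq_of_le hta_t₁ with h | h
    · exact h
    · exfalso; rw [← h] at ht₁B; linarith
  have hrt₁ : r t₁ = B₀ := by
    refine le_antisymm ?_ ht₁B
    have htend : Filter.Tendsto r (nhdsWithin t₁ (Set.Iio t₁)) (nhds (r t₁)) :=
      (hrc.continuousAt.tendsto).mono_left nhdsWithin_le_nhds
    have hev : ∀ᶠ t in nhdsWithin t₁ (Set.Iio t₁), r t ≤ B₀ := by
      filter_upwards [Ico_mem_nhdsLT_of_mem ⟨hta_lt_t₁, le_refl t₁⟩] with t ht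
      exact le_of_lt (hlt t ht)
    exact le_of_tendsto htend hev
  -- t₀ : last time in [ta, t₁] where r ≤ A₀
  set S₀ : Set ℝ := {t | t ∈ Set.Icc ta t₁ ∧ r t ≤ A₀} with hS₀
  have hS₀closed : IsClosed S₀ := by
    have : S₀ = Set.Icc ta t₁ ∩ {t | r t ≤ A₀} := rfl
    rw [this]
    exact isClosed_Icc.inter (isClosed_le hrc continuous_const)
  have hS₀ne : S₀.Nonempty := ⟨ta, ⟨le_refl _, hta_t₁⟩, hta⟩
  have hS₀bdd : BddAbove S₀ := ⟨t₁, fun t ht => ht.1.2⟩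
  set t₀ : ℝ := sSup S₀ with ht₀def
  have ht₀mem : t₀ ∈ S₀ := hS₀closed.csSup_mem hS₀ne hS₀bdd
  have hta_t₀ : ta ≤ t₀ := ht₀mem.1.1
  have ht₀t₁ : t₀ ≤ t₁ := ht₀mem.1.2
  have ht₀A : r t₀ ≤ A₀ := ht₀mem.2
  have hgt : ∀ t ∈ Set.Ioc t₀ t₁, A₀ < r t := by
    intro t ht
    by_contra h
    push_neg at h
    have : t ∈ S₀ := ⟨⟨le_trans hta_t₀ (le_of_lt ht.1), ht.2⟩, h⟩
    exact absurd (le_csSup hS₀bdd this) (not_le.2 ht.1)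
  have ht₀_lt_t₁ : t₀ < t₁ := by
    rcases lt_or_eq_of_le ht₀t₁ with h | h
    · exact h
    · exfalso; rw [h, hrt₁] at ht₀A; linarith
  have hrt₀ : r t₀ = A₀ := by
    refine le_antisymm ht₀A ?_
    have htend : Filter.Tendsto r (nhdsWithin t₀ (Set.Ioi t₀)) (nhds (r t₀)) :=
      (hrc.continuousAt.tendsto).mono_left nhdsWithin_le_nhds
    have hev : ∀ᶠ t in nhdsWithin t₀ (Set.Ioi t₀), A₀ ≤ r t := by
      filter_upwards [Ioc_mem_nhdsGT_of_mem ⟨le_refl t₀, ht₀_lt_t₁⟩] with t ht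
      exact le_of_lt (hgt t ht)
    exact ge_of_tendsto htend hev
  -- bounds on [t₀, t₁]
  have hbnd : ∀ t ∈ Set.Icc t₀ t₁, A₀ ≤ r t ∧ r t ≤ B₀ := by
    intro t ht
    constructor
    · rcases eq_or_lt_of_le ht.1 with h | h
      · rw [← h, hrt₀]
      · exact le_of_lt (hgt t ⟨h, ht.2⟩)
    · rcases eq_or_lt_of_le ht.2 with h | h
      · rw [h, hrt₁]
      · exact le_of_lt (hlt t ⟨le_trans hta_t₀ ht.1, h⟩)
  -- FTC
  have hFTC : ∫ t in t₀..t₁, r' t = B₀ - A₀ := by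
    rw [intervalIntegral.integral_eq_sub_of_hasDerivAt (fun t _ => hderiv t)
      (hr'cont.intervalIntegrable _ _), hrt₁, hrt₀]
  have habs : B₀ - A₀ ≤ ∫ t in t₀..t₁, |r' t| := by
    calc B₀ - A₀ = ∫ t in t₀..t₁, r' t := hFTC.symm
    _ ≤ |∫ t in t₀..t₁, r' t| := le_abs_self _
    _ ≤ ∫ t in t₀..t₁, |r' t| :=
        intervalIntegral.abs_integral_le_integral_abs (le_of_lt ht₀_lt_t₁)
  -- key pointwise bound
  set s : ℝ := Real.sqrt B₀ with hs
  have hspos : 0 < s := Real.sqrt_pos.2 hB₀pos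
  have hssq : s ^ 2 = B₀ := Real.sq_sqrt (le_of_lt hB₀pos)
  set c : ℝ := (B₀ - A₀) / s with hc
  have hcpos : 0 < c := div_pos (by linarith) hspos
  have hpt : ∀ t ∈ Set.Icc t₀ t₁, 2 * c * (|r' t| / s) - c ^ 2 ≤ (N t) ^ 2 := by
    intro t ht
    obtain ⟨h1, h2⟩ := hbnd t ht
    have hNt : (N t) ^ 2 = (r' t) ^ 2 / r t + r t * Y t := hnorm t h1 h2
    have hrY : 0 ≤ r t * Y t := mul_nonneg (le_of_lt (hrpos t)) (hY t)
    have hdiv : (r' t) ^ 2 / B₀ ≤ (r' t) ^ 2 / r t :=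
      div_le_div_of_nonneg_left (sq_nonneg _) (hrpos t) h2
    have heq : (r' t) ^ 2 / B₀ = (|r' t| / s) ^ 2 := by
      rw [div_pow, hssq, sq_abs]
    nlinarith [sq_nonneg (|r' t| / s - c)]
  -- integrate the pointwise bound
  have habs_cont : Continuous fun t => |r' t| := hr'cont.abs
  have hint1 : IntervalIntegrable (fun t => 2 * c * (|r' t| / s) - c ^ 2)
      MeasureTheory.volume t₀ t₁ :=
    (((continuous_const.mul (habs_cont.div_const s)).sub continuous_const).intervalIntegrable _ _)
  have hint2 : IntervalIntegrable (fun t => (N t) ^ 2) MeasureTheory.volume t₀ t₁ :=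
    ((hNcont.pow 2).intervalIntegrable _ _)
  have hImono : ∫ t in t₀..t₁, (2 * c * (|r' t| / s) - c ^ 2) ≤ ∫ t in t₀..t₁, (N t) ^ 2 :=
    intervalIntegral.integral_mono_on (le_of_lt ht₀_lt_t₁) hint1 hint2 hpt
  have hIeval : ∫ t in t₀..t₁, (2 * c * (|r' t| / s) - c ^ 2)
      = (2 * c / s) * (∫ t in t₀..t₁, |r' t|) - c ^ 2 * (t₁ - t₀) := by
    rw [intervalIntegral.integral_sub (f := fun t => 2 * c * (|r' t| / s)) (g := fun _ => c ^ 2)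
      ((continuous_const.mul (habs_cont.div_const s)).intervalIntegrable _ _)
      (intervalIntegrable_const)]
    rw [intervalIntegral.integral_const]
    have : ∫ t in t₀..t₁, 2 * c * (|r' t| / s) = (2 * c / s) * ∫ t in t₀..t₁, |r' t| := by
      rw [← intervalIntegral.integral_const_mul]
      congr 1; ext t; ring
    rw [this, smul_eq_mul]; ring
  have ht₁le : t₁ - t₀ ≤ 1 := by
    have : t₁ ≤ tb' := ht₁tb'
    linarith
  have hkey : c ^ 2 ≤ ∫ t in t₀..t₁, (N t) ^ 2 := by
    have h1 : (2 * c / s) * (B₀ - A₀) ≤ (2 * c / s) * (∫ t in t₀..t₁, |r' t|) := by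
      apply mul_le_mul_of_nonneg_left habs
      positivity
    have h2 : c ^ 2 * (t₁ - t₀) ≤ c ^ 2 * 1 :=
      mul_le_mul_of_nonneg_left ht₁le (sq_nonneg _)
    have h3 : (2 * c / s) * (B₀ - A₀) = 2 * c ^ 2 := by
      rw [hc]; field_simp
    calc c ^ 2 = 2 * c ^ 2 - c ^ 2 * 1 := by ring
    _ ≤ (2 * c / s) * (∫ t in t₀..t₁, |r' t|) - c ^ 2 * (t₁ - t₀) := by
        rw [← h3]; linarith
    _ = ∫ t in t₀..t₁, (2 * c * (|r' t| / s) - c ^ 2) := hIeval.symm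
    _ ≤ ∫ t in t₀..t₁, (N t) ^ 2 := hImono
  -- periodicity: ∫₀¹ N² = ∫_{t₀}^{t₀+1} N² ≥ ∫_{t₀}^{t₁} N²
  have hN2per : Function.Periodic (fun t => (N t) ^ 2) 1 := fun t => by
    simp [hNper t]
  have hper : ∫ t in (0:ℝ)..1, (N t) ^ 2 = ∫ t in t₀..(t₀ + 1), (N t) ^ 2 := by
    have := hN2per.intervalIntegral_add_eq 0 t₀
    simpa using this
  have hsplit : ∫ t in t₀..(t₀ + 1), (N t) ^ 2
      = (∫ t in t₀..t₁, (N t) ^ 2) + ∫ t in t₁..(t₀ + 1), (N t) ^ 2 := by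
    rw [intervalIntegral.integral_add_adjacent_intervals (f := fun t => (N t) ^ 2)
      ((hNcont.pow 2).intervalIntegrable _ _) ((hNcont.pow 2).intervalIntegrable _ _)]
  have htail : 0 ≤ ∫ t in t₁..(t₀ + 1), (N t) ^ 2 := by
    apply intervalIntegral.integral_nonneg (by linarith)
    intro t _; exact sq_nonneg _
  have hfinal : c ^ 2 ≤ ∫ t in (0:ℝ)..1, (N t) ^ 2 := by
    rw [hper, hsplit]; linarith
  calc (B₀ - A₀) / Real.sqrt B₀ = c := rfl
  _ = Real.sqrt (c ^ 2) := by rw [Real.sqrt_sq (le_of_lt hcpos)]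
  _ ≤ Real.sqrt (∫ t in (0:ℝ)..1, (N t) ^ 2) := Real.sqrt_le_sqrt hfinal
end

section
/- Let ρ : Z → ℝ be C² on the cylinder Z = [s₀−σ⁻, s₀+σ⁺] × S¹ with Δρ ≥ −ν₀ wherever ρ ≥ ln R₀, for constants ν₀ ≥ 0 and R₀ ≥ 1. Fix ν > ν₀ and set χ(s,t) = ρ(s,t) + ν(s−s₀)²/2. If σ± ≤ σ₀ and ρ ≤ ln S on ∂Z, then sup_Z ρ ≤ ln max(R₀, S) + ν σ₀²/2. -/
open Set Filter Topology

/-- The flat Laplacian `Δ = ∂_s² + ∂_t²` of a function on `ℝ × ℝ`. -/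
noncomputable def flatLaplacian (F : ℝ × ℝ → ℝ) (z : ℝ × ℝ) : ℝ :=
  deriv (fun s => deriv (fun s' => F (s', z.2)) s) z.1 +
    deriv (fun t => deriv (fun t' => F (z.1, t')) t) z.2

/-- Second derivative test: at an interior local max of a `C²` function,
the second derivative is nonpositive. -/
lemma second_deriv_nonpos_of_isLocalMax {f : ℝ → ℝ} {x : ℝ}
    (hf : ContDiff ℝ 2 f) (hx : IsLocalMax f x) :
    deriv (deriv f) x ≤ 0 := by
  by_contra hpos
  push_neg at hpos
  have hdiff : Differentiable ℝ f := hf.differentiable two_ne_zero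
  have h21 : ContDiff ℝ (1 + 1) f := by
    convert hf using 2
    norm_num
  have hf' : ContDiff ℝ 1 (deriv f) := ((contDiff_succ_iff_deriv).mp h21).2.2
  have hd0 : deriv f x = 0 := hx.deriv_eq_zero
  have hD : HasDerivAt (deriv f) (deriv (deriv f) x) x :=
    ((hf'.differentiable one_ne_zero) x).hasDerivAt
  have hslope : Tendsto (slope (deriv f) x) (𝓝[≠] x) (𝓝 (deriv (deriv f) x)) :=
    hasDerivAt_iff_tendsto_slope.mp hD
  have hev : ∀ᶠ y in 𝓝[>] x, 0 < slope (deriv f) x y := by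
    have h1 : ∀ᶠ y in 𝓝[≠] x, 0 < slope (deriv f) x y :=
      hslope.eventually (eventually_gt_nhds hpos)
    exact h1.filter_mono (nhdsWithin_mono x (fun y hy => ne_of_gt hy))
  have hev' : ∀ᶠ y in 𝓝[>] x, 0 < deriv f y := by
    filter_upwards [hev, self_mem_nhdsWithin] with y hy hy'
    have hxy : x < y := hy'
    rw [slope_def_field] at hy
    have hpos2 : 0 < (deriv f y - deriv f x) / (y - x) := hy
    rcases div_pos_iff.mp hpos2 with ⟨h1, _⟩ | ⟨_, h2⟩
    · linarith [hd0]
    · linarith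
  rw [eventually_iff, mem_nhdsGT_iff_exists_Ioo_subset] at hev'
  obtain ⟨u, hu, hsub⟩ := hev'
  have hxu : x < u := hu
  have smo : StrictMonoOn f (Icc x u) := by
    apply strictMonoOn_of_deriv_pos (convex_Icc x u) hdiff.continuous.continuousOn
    intro y hy
    rw [interior_Icc] at hy
    exact hsub hy
  have h1 : ∀ᶠ y in 𝓝[>] x, f x < f y := by
    filter_upwards [Ioo_mem_nhdsGT_of_mem ⟨le_rfl, hxu⟩] with y hy
    exact smo ⟨le_rfl, hxu.le⟩ ⟨hy.1.le, hy.2.le⟩ hy.1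
  have h2 : ∀ᶠ y in 𝓝[>] x, f y ≤ f x := hx.filter_mono nhdsWithin_le_nhds
  obtain ⟨y, hy1, hy2⟩ := (h1.and h2).exists
  linarith

/-- Proposition 4.4 (maximum principle with auxiliary quadratic): let `ρ` be
`C²` on the cylinder `Z = [s₀−σ⁻, s₀+σ⁺] × S¹` (a function on `ℝ × ℝ`,
1-periodic in the second variable) with `Δρ ≥ −ν₀` wherever `ρ ≥ ln R₀`, for
constants `ν₀ ≥ 0`, `R₀ ≥ 1`. If `σ± ≤ σ₀`, `ν > ν₀` and `ρ ≤ ln S` on the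
boundary circles, then `ρ ≤ ln max(R₀, S) + ν σ₀²/2` on `Z`. -/
theorem stmt_17 (ρ : ℝ × ℝ → ℝ) (s₀ σm σp σ₀ ν₀ ν R₀ S : ℝ)
    (hρ : ContDiff ℝ 2 ρ)
    (hper : ∀ s t : ℝ, ρ (s, t + 1) = ρ (s, t))
    (hν₀ : 0 ≤ ν₀) (hR₀ : 1 ≤ R₀) (hS : 0 < S) (hν : ν₀ < ν)
    (hσm : 0 ≤ σm) (hσp : 0 ≤ σp) (hσm0 : σm ≤ σ₀) (hσp0 : σp ≤ σ₀)
    (hlap : ∀ z : ℝ × ℝ, z.1 ∈ Set.Icc (s₀ - σm) (s₀ + σp) →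
      Real.log R₀ ≤ ρ z → -ν₀ ≤ flatLaplacian ρ z)
    (hbdry : ∀ t : ℝ, ρ (s₀ - σm, t) ≤ Real.log S ∧ ρ (s₀ + σp, t) ≤ Real.log S) :
    ∀ z : ℝ × ℝ, z.1 ∈ Set.Icc (s₀ - σm) (s₀ + σp) →
      ρ z ≤ Real.log (max R₀ S) + ν * σ₀ ^ 2 / 2 := by
  have hνpos : 0 < ν := lt_of_le_of_lt hν₀ hν
  have hσ0 : 0 ≤ σ₀ := le_trans hσm hσm0
  set q : ℝ → ℝ := fun s => ν * (s - s₀) ^ 2 / 2 with hq_def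
  set χ : ℝ × ℝ → ℝ := fun z => ρ z + q z.1 with hχ_def
  have hqc : ContDiff ℝ 2 q := by
    apply ContDiff.div_const
    exact contDiff_const.mul ((contDiff_id.sub contDiff_const).pow 2)
  have hχc : ContDiff ℝ 2 χ := hρ.add (hqc.comp contDiff_fst)
  have hq0 : ∀ s, 0 ≤ q s := fun s => by
    simp only [hq_def]; positivity
  have hqb : ∀ s, s ∈ Icc (s₀ - σm) (s₀ + σp) → q s ≤ ν * σ₀ ^ 2 / 2 := by
    intro s hs
    have h1 : -σ₀ ≤ s - s₀ := by have := hs.1; linarith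
    have h2 : s - s₀ ≤ σ₀ := by have := hs.2; linarith
    have h3 : (s - s₀) ^ 2 ≤ σ₀ ^ 2 := sq_le_sq' h1 h2
    have h4 := mul_le_mul_of_nonneg_left h3 hνpos.le
    simp only [hq_def]
    linarith
  -- periodicity of χ in the second variable
  have hperχ : ∀ s t : ℝ, χ (s, Int.fract t) = χ (s, t) := by
    intro s t
    have hp : Function.Periodic (fun u => ρ (s, u)) 1 := fun u => hper s u
    have h2 := hp.sub_int_mul_eq (x := t) ⌊t⌋
    simp only [mul_one] at h2
    show ρ (s, Int.fract t) + q s = ρ (s, t) + q s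
    simp only [Int.fract]
    exact congrArg (· + q s) h2
  -- maximum over the compact fundamental domain
  set K : Set (ℝ × ℝ) := Icc (s₀ - σm) (s₀ + σp) ×ˢ Icc (0 : ℝ) 1 with hK_def
  have hKc : IsCompact K := isCompact_Icc.prod isCompact_Icc
  have hs₀mem : s₀ ∈ Icc (s₀ - σm) (s₀ + σp) := ⟨by linarith, by linarith⟩
  have hKne : K.Nonempty := ⟨(s₀, 0), Set.mem_prod.mpr ⟨hs₀mem, by norm_num⟩⟩
  obtain ⟨w, hwK, hmax⟩ := hKc.exists_isMaxOn hKne hχc.continuous.continuousOn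
  rw [Set.mem_prod] at hwK
  obtain ⟨hw1, hw2⟩ := hwK
  -- upper bound by the max over the whole cylinder
  have hub : ∀ z : ℝ × ℝ, z.1 ∈ Icc (s₀ - σm) (s₀ + σp) → χ z ≤ χ w := by
    intro z hz
    have hfr : (z.1, Int.fract z.2) ∈ K :=
      Set.mem_prod.mpr ⟨hz, ⟨Int.fract_nonneg _, (Int.fract_lt_one _).le⟩⟩
    have h1 := isMaxOn_iff.mp hmax _ hfr
    rw [hperχ] at h1
    simpa using h1
  have hlogS : Real.log S ≤ Real.log (max R₀ S) :=
    Real.log_le_log hS (le_max_right _ _)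
  have hlogR : Real.log R₀ ≤ Real.log (max R₀ S) :=
    Real.log_le_log (lt_of_lt_of_le one_pos hR₀) (le_max_left _ _)
  suffices hW : χ w ≤ Real.log (max R₀ S) + ν * σ₀ ^ 2 / 2 by
    intro z hz
    have h1 := hub z hz
    have h3 : ρ z ≤ χ z := le_add_of_nonneg_right (hq0 z.1)
    exact h3.trans (h1.trans hW)
  have hχw : χ w = ρ w + q w.1 := rfl
  by_cases hbd : w.1 = s₀ - σm ∨ w.1 = s₀ + σp
  · -- boundary case
    have hρw : ρ w ≤ Real.log S := by
      have he : ρ (w.1, w.2) = ρ w := by rw [Prod.mk.eta]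
      rcases hbd with h | h
      · have hb := (hbdry w.2).1
        rw [← he, h]; exact hb
      · have hb := (hbdry w.2).2
        rw [← he, h]; exact hb
    linarith [hqb w.1 hw1]
  · -- interior case
    push_neg at hbd
    have hint : w.1 ∈ Ioo (s₀ - σm) (s₀ + σp) :=
      ⟨hw1.1.lt_of_ne' hbd.1, hw1.2.lt_of_ne hbd.2⟩
    by_cases hcase : Real.log R₀ ≤ ρ w
    · exfalso
      -- second derivative test in the s-direction
      set g : ℝ → ℝ := fun s => χ (s, w.2) with hg_def
      have hgc : ContDiff ℝ 2 g := hχc.comp (contDiff_id.prodMk contDiff_const)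
      have hgw : χ w = g w.1 := by simp only [hg_def]
      have hgmax : IsLocalMax g w.1 := by
        have hnb : Ioo (s₀ - σm) (s₀ + σp) ∈ 𝓝 w.1 := Ioo_mem_nhds hint.1 hint.2
        filter_upwards [hnb] with s hs
        exact (hub (s, w.2) (Ioo_subset_Icc_self hs)).trans_eq hgw
      have hgs : deriv (deriv g) w.1 ≤ 0 := second_deriv_nonpos_of_isLocalMax hgc hgmax
      -- second derivative test in the t-direction
      set h : ℝ → ℝ := fun t => ρ (w.1, t) with hh_def
      have hhc : ContDiff ℝ 2 h := hρ.comp (contDiff_const.prodMk contDiff_id)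
      have hρw : ρ w = h w.2 := by simp only [hh_def]
      have hhmax : IsLocalMax h w.2 := by
        apply Filter.Eventually.of_forall
        intro t
        have h1 := hub (w.1, t) hw1
        have h2 : χ (w.1, t) = h t + q w.1 := rfl
        rw [h2, hχw, hρw] at h1
        linarith
      have hht : deriv (deriv h) w.2 ≤ 0 := second_deriv_nonpos_of_isLocalMax hhc hhmax
      -- compute the s-part of the Laplacian
      have hgd : Differentiable ℝ g := hgc.differentiable two_ne_zero
      have hg21 : ContDiff ℝ (1 + 1) g := by
        convert hgc using 2
        norm_num
      have hg' : ContDiff ℝ 1 (deriv g) := ((contDiff_succ_iff_deriv).mp hg21).2.2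
      have hq' : ∀ s : ℝ, HasDerivAt q (ν * (s - s₀)) s := by
        intro s
        have h1 : HasDerivAt (fun s' : ℝ => (s' - s₀) ^ 2) (2 * (s - s₀)) s := by
          simpa using ((hasDerivAt_id s).sub_const s₀).fun_pow 2
        have h2 := (h1.const_mul ν).div_const 2
        convert h2 using 1
        all_goals try rfl
        ring
      have hf₁ : ∀ s : ℝ, deriv (fun s' => ρ (s', w.2)) s = deriv g s - ν * (s - s₀) := by
        intro s
        have hD : HasDerivAt (fun s' => ρ (s', w.2)) (deriv g s - ν * (s - s₀)) s := by
          have h1 := (hgd s).hasDerivAt.sub (hq' s)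
          convert h1 using 1
          all_goals try rfl
          funext s'
          simp only [hg_def, hχ_def, Pi.sub_apply]
          ring
        exact hD.deriv
      have hlin : HasDerivAt (fun s : ℝ => ν * (s - s₀)) ν w.1 := by
        simpa using ((hasDerivAt_id w.1).sub_const s₀).const_mul ν
      have hdd : deriv (fun s => deriv (fun s' => ρ (s', w.2)) s) w.1
          = deriv (deriv g) w.1 - ν := by
        have h2 : HasDerivAt (fun s => deriv g s - ν * (s - s₀))
            (deriv (deriv g) w.1 - ν) w.1 :=
          ((hg'.differentiable one_ne_zero w.1).hasDerivAt).sub hlin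
        have h3 : deriv (fun s => deriv (fun s' => ρ (s', w.2)) s) w.1
            = deriv (fun s => deriv g s - ν * (s - s₀)) w.1 := by
          congr 1
          funext s
          exact hf₁ s
        rw [h3, h2.deriv]
      have hlapw := hlap w hw1 hcase
      have hflat : flatLaplacian ρ w = deriv (deriv g) w.1 - ν + deriv (deriv h) w.2 := by
        unfold flatLaplacian
        rw [hdd]
      rw [hflat] at hlapw
      linarith
    · push_neg at hcase
      linarith [hqb w.1 hw1]
end
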